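/- Let n ≥ 2, let K ⊆ ℝⁿ be a proper subdual cone, let A ∈ ℝ^{n×n} be symmetric, and let {v¹, …, vⁿ} be an orthonormal system of eigenvectors of A with A vⁱ = λᵢ vⁱ and λ₁ < λ₂ ≤ ⋯ ≤ λₙ. For c ∈ (λ₁, λ₂] set θᵢ(c) = (λᵢ − c)/(c − λ₁) for i = 2, …, n and L_c = {x ∈ ℝⁿ : ⟨v¹, x⟩ ≥ √(θ₂(c)⟨v², x⟩² + ⋯ + θₙ(c)⟨vⁿ, x⟩²)}, and set W = (L_{λ₂} ∪ (−L_{λ₂})) ∩ int(K). Then the sublevel set [φ_A ≤ c] = {x ∈ int(K) : ⟨Ax, x⟩ ≤ c‖x‖²} is convex for every c ∉ (λ₂, λₙ) if and only if v¹ ∈ W* ∪ (−W*), where W* = {u ∈ ℝⁿ : ⟨u, x⟩ ≥ 0 for all x ∈ W} is the dual cone of W. -/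

import Mathlib

open scoped RealInnerProductSpace

/-- The quadratic form `x ↦ ⟨A x, x⟩` associated with a matrix `A`. -/
noncomputable def quadForm {n : ℕ} (A : Matrix (Fin n) (Fin n) ℝ)
    (x : EuclideanSpace ℝ (Fin n)) : ℝ :=
  ⟪Matrix.toEuclideanLin A x, x⟫

/-- `K` is a cone: closed under multiplication by positive scalars. -/
def IsCone {n : ℕ} (K : Set (EuclideanSpace ℝ (Fin n))) : Prop :=
  ∀ ⦃t : ℝ⦄, 0 < t → ∀ ⦃x⦄, x ∈ K → t • x ∈ K

/-- A proper cone: a pointed closed convex cone with nonempty interior. -/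
def IsProperCone {n : ℕ} (K : Set (EuclideanSpace ℝ (Fin n))) : Prop :=
  IsCone K ∧ Convex ℝ K ∧ IsClosed K ∧ K ∩ (-K) ⊆ {0} ∧ (interior K).Nonempty

/-- The dual cone `K* = {u : ⟨u, y⟩ ≥ 0 for all y ∈ K}`. -/
def dualCone {n : ℕ} (K : Set (EuclideanSpace ℝ (Fin n))) : Set (EuclideanSpace ℝ (Fin n)) :=
  {u | ∀ y ∈ K, 0 ≤ ⟪u, y⟫}

/-- The sublevel set `[φ_A ≤ c] = {x ∈ int K : ⟨A x, x⟩ ≤ c ‖x‖²}`. -/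
noncomputable def sublevel {n : ℕ} (A : Matrix (Fin n) (Fin n) ℝ)
    (K : Set (EuclideanSpace ℝ (Fin n))) (c : ℝ) : Set (EuclideanSpace ℝ (Fin n)) :=
  {x ∈ interior K | quadForm A x ≤ c * ‖x‖ ^ 2}

/-- The elliptic cone `L = {x : √(∑_{i≥2} θᵢ ⟨vⁱ, x⟩²) ≤ ⟨v¹, x⟩}`. -/
noncomputable def ellipCone {n : ℕ} [NeZero n]
    (v : Fin n → EuclideanSpace ℝ (Fin n)) (θ : Fin n → ℝ) :
    Set (EuclideanSpace ℝ (Fin n)) :=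
  {x | Real.sqrt (∑ i ∈ Finset.univ.erase 0, θ i * ⟪v i, x⟫ ^ 2) ≤ ⟪v 0, x⟫}


open Finset

section helpers
variable {n : ℕ} [NeZero n] {v : Fin n → EuclideanSpace ℝ (Fin n)}
  {A : Matrix (Fin n) (Fin n) ℝ} {lam : Fin n → ℝ}

lemma expand (hv : Orthonormal ℝ v) (x : EuclideanSpace ℝ (Fin n)) :
    ∑ i, ⟪v i, x⟫ • v i = x := by
  have hcard : Fintype.card (Fin n) = Module.finrank ℝ (EuclideanSpace ℝ (Fin n)) := by
    simp
  let b0 := basisOfOrthonormalOfCardEqFinrank hv hcard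
  have hb0 : ⇑b0 = v := coe_basisOfOrthonormalOfCardEqFinrank hv hcard
  let b := b0.toOrthonormalBasis (by rwa [hb0])
  have hb : ⇑b = v := by rw [Module.Basis.coe_toOrthonormalBasis, hb0]
  have := b.sum_repr' x
  rwa [hb] at this

lemma norm_sq_eq (hv : Orthonormal ℝ v) (x : EuclideanSpace ℝ (Fin n)) :
    ‖x‖ ^ 2 = ∑ i, ⟪v i, x⟫ ^ 2 := by
  have h := expand hv x
  have : ⟪x, x⟫ = ∑ i, ⟪v i, x⟫ ^ 2 := by
    conv_lhs => rw [← h]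
    rw [sum_inner]
    refine Finset.sum_congr rfl fun i _ => ?_
    rw [real_inner_smul_left, h]; ring
  rw [← real_inner_self_eq_norm_sq, this]

lemma quad_eq {A : Matrix (Fin n) (Fin n) ℝ} {lam : Fin n → ℝ}
    (hv : Orthonormal ℝ v) (heig : ∀ i, Matrix.toEuclideanLin A (v i) = lam i • v i)
    (x : EuclideanSpace ℝ (Fin n)) :
    quadForm A x = ∑ i, lam i * ⟪v i, x⟫ ^ 2 := by
  have h := expand hv x
  unfold quadForm
  conv_lhs => rw [← h]
  rw [map_sum, sum_inner]
  refine Finset.sum_congr rfl fun i _ => ?_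
  rw [map_smul, heig i, smul_smul, real_inner_smul_left, h]
  ring

lemma coords_zero (hv : Orthonormal ℝ v) {x : EuclideanSpace ℝ (Fin n)}
    (h : ∀ i, ⟪v i, x⟫ = 0) : x = 0 := by
  rw [← expand hv x]
  simp [h]



lemma sum_sub_eq (hv : Orthonormal ℝ v)
    (heig : ∀ i, Matrix.toEuclideanLin A (v i) = lam i • v i)
    (c : ℝ) (x : EuclideanSpace ℝ (Fin n)) :
    ∑ i, (lam i - c) * ⟪v i, x⟫ ^ 2 = quadForm A x - c * ‖x‖ ^ 2 := by
  rw [quad_eq hv heig, norm_sq_eq hv, Finset.mul_sum, ← Finset.sum_sub_distrib]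
  exact Finset.sum_congr rfl fun i _ => by ring

lemma sublevel_iff (hv : Orthonormal ℝ v)
    (heig : ∀ i, Matrix.toEuclideanLin A (v i) = lam i • v i)
    (K : Set (EuclideanSpace ℝ (Fin n))) (c : ℝ) (x : EuclideanSpace ℝ (Fin n)) :
    x ∈ sublevel A K c ↔ x ∈ interior K ∧ ∑ i, (lam i - c) * ⟪v i, x⟫ ^ 2 ≤ 0 := by
  rw [sublevel, Set.mem_sep_iff, sum_sub_eq hv heig, sub_nonpos]

lemma coords_eq_zero {x : EuclideanSpace ℝ (Fin n)} {w : Fin n → ℝ}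
    (hnn : ∀ i, 0 ≤ w i * ⟪v i, x⟫ ^ 2)
    (hsum : ∑ i, w i * ⟪v i, x⟫ ^ 2 ≤ 0) : ∀ i, w i * ⟪v i, x⟫ ^ 2 = 0 := by
  intro i
  have h0 := le_antisymm hsum (Finset.sum_nonneg fun i _ => hnn i)
  exact (Finset.sum_eq_zero_iff_of_nonneg fun i _ => hnn i).mp h0 i (Finset.mem_univ i)

lemma zero_not_mem_interior {K : Set (EuclideanSpace ℝ (Fin n))} (hK : IsProperCone K) :
    (0 : EuclideanSpace ℝ (Fin n)) ∉ interior K := by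
  intro h0
  obtain ⟨ε, hε, hball⟩ := Metric.isOpen_iff.mp isOpen_interior 0 h0
  set u : EuclideanSpace ℝ (Fin n) := EuclideanSpace.single 0 (ε/2) with hu
  have hnu : ‖u‖ = ε/2 := by
    rw [hu, EuclideanSpace.norm_single, Real.norm_eq_abs, abs_of_pos (by linarith)]
  have hmem : ∀ w : EuclideanSpace ℝ (Fin n), ‖w‖ = ε/2 → w ∈ K := by
    intro w hw
    exact interior_subset (hball (by rw [Metric.mem_ball, dist_zero_right, hw]; linarith))
  have h1 : u ∈ K := hmem u hnu
  have h2 : u ∈ -K := by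
    rw [Set.mem_neg]
    exact hmem (-u) (by rw [norm_neg, hnu])
  have := hK.2.2.2.1 ⟨h1, h2⟩
  rw [Set.mem_singleton_iff, hu] at this
  have := congrArg (fun w : EuclideanSpace ℝ (Fin n) => w 0) this
  dsimp only at this
  rw [EuclideanSpace.single_apply] at this
  simp at this
  linarith

lemma fin_one_le {i : Fin n} (hn : 2 ≤ n) (hi : i ≠ 0) : (1 : Fin n) ≤ i := by
  rw [Fin.le_def, Fin.val_one' n, Nat.mod_eq_of_lt (by omega)]
  have : (i : ℕ) ≠ 0 := fun h => hi (Fin.ext (by simpa using h))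
  omega

lemma ellip_iff (hv : Orthonormal ℝ v) (hn : 2 ≤ n) (hmono : Monotone lam)
    (h12 : lam 0 < lam 1) (x : EuclideanSpace ℝ (Fin n)) :
    (x ∈ ellipCone v (fun i => (lam i - lam 1) / (lam 1 - lam 0)) ∪
       -ellipCone v (fun i => (lam i - lam 1) / (lam 1 - lam 0))) ↔
      ∑ i, (lam i - lam 1) * ⟪v i, x⟫ ^ 2 ≤ 0 := by
  have hpos : (0:ℝ) < lam 1 - lam 0 := by linarith
  set S := ∑ i ∈ univ.erase 0, ((lam i - lam 1) / (lam 1 - lam 0)) * ⟪v i, x⟫ ^ 2 with hSdef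
  have hS0 : 0 ≤ S := by
    refine Finset.sum_nonneg fun i hi => ?_
    have h1i : lam 1 ≤ lam i := hmono (fin_one_le hn (Finset.mem_erase.mp hi).1)
    have : 0 ≤ (lam i - lam 1) / (lam 1 - lam 0) := div_nonneg (by linarith) (by linarith)
    positivity
  have hmem : (x ∈ ellipCone v (fun i => (lam i - lam 1) / (lam 1 - lam 0)) ∪
       -ellipCone v (fun i => (lam i - lam 1) / (lam 1 - lam 0))) ↔
      Real.sqrt S ≤ |⟪v 0, x⟫| := by
    rw [Set.mem_union, Set.mem_neg]
    simp only [ellipCone, Set.mem_setOf_eq]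
    rw [le_abs]
    have he : ∑ i ∈ univ.erase 0, ((lam i - lam 1) / (lam 1 - lam 0)) * ⟪v i, -x⟫ ^ 2 = S := by
      rw [hSdef]
      exact Finset.sum_congr rfl fun i _ => by rw [inner_neg_right]; ring
    rw [he, inner_neg_right]
  rw [hmem]
  have habs : Real.sqrt S ≤ |⟪v 0, x⟫| ↔ S ≤ ⟪v 0, x⟫ ^ 2 := by
    constructor
    · intro h
      have := pow_le_pow_left₀ (Real.sqrt_nonneg S) h 2
      rwa [Real.sq_sqrt hS0, sq_abs] at this
    · intro h
      have := Real.sqrt_le_sqrt h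
      rwa [Real.sqrt_sq_eq_abs] at this
  rw [habs]
  have hsum : ∑ i, (lam i - lam 1) * ⟪v i, x⟫ ^ 2 =
      (lam 0 - lam 1) * ⟪v 0, x⟫ ^ 2 +
        ∑ i ∈ univ.erase 0, (lam i - lam 1) * ⟪v i, x⟫ ^ 2 :=
    (Finset.add_sum_erase _ _ (Finset.mem_univ 0)).symm
  have hSmul : S * (lam 1 - lam 0) = ∑ i ∈ univ.erase 0, (lam i - lam 1) * ⟪v i, x⟫ ^ 2 := by
    rw [hSdef, Finset.sum_mul]
    exact Finset.sum_congr rfl fun i _ => by field_simp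
  rw [← mul_le_mul_iff_left₀ hpos, hSmul, hsum]
  constructor <;> intro h <;> nlinarith

lemma convex_main (hv : Orthonormal ℝ v)
    (heig : ∀ i, Matrix.toEuclideanLin A (v i) = lam i • v i)
    (hn : 2 ≤ n) (hmono : Monotone lam)
    {K : Set (EuclideanSpace ℝ (Fin n))} (hKc : Convex ℝ K) {c : ℝ}
    (hc0 : lam 0 ≤ c) (hc1 : c ≤ lam 1)
    {e : ℝ} (he : e ^ 2 = 1)
    (hsgn : ∀ x ∈ sublevel A K c, 0 ≤ e * ⟪v 0, x⟫) :
    Convex ℝ (sublevel A K c) := by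
  have hlamc : ∀ i : Fin n, i ≠ 0 → 0 ≤ lam i - c := by
    intro i hi
    have := hmono (fin_one_le hn hi)
    linarith
  set T : EuclideanSpace ℝ (Fin n) → EuclideanSpace ℝ (Fin n) :=
    fun z => WithLp.toLp 2 (fun i => if i = 0 then 0 else Real.sqrt (lam i - c) * ⟪v i, z⟫) with hT
  have hTnorm : ∀ z, ‖T z‖ ^ 2 = ∑ i ∈ univ.erase 0, (lam i - c) * ⟪v i, z⟫ ^ 2 := by
    intro z
    rw [EuclideanSpace.norm_eq, Real.sq_sqrt (by positivity),
      ← Finset.sum_erase_add _ _ (Finset.mem_univ 0)]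
    have h0 : ‖T z 0‖ ^ 2 = 0 := by simp [hT]
    rw [h0, add_zero]
    refine Finset.sum_congr rfl fun i hi => ?_
    have hi0 : i ≠ 0 := (Finset.mem_erase.mp hi).1
    rw [hT]
    simp only [PiLp.toLp_apply, if_neg hi0]
    rw [Real.norm_eq_abs, sq_abs, mul_pow, Real.sq_sqrt (hlamc i hi0)]
  have hTlin : ∀ (a b : ℝ) (x y : EuclideanSpace ℝ (Fin n)),
      T (a • x + b • y) = a • T x + b • T y := by
    intro a b x y
    ext i
    have happ : ∀ (z : EuclideanSpace ℝ (Fin n)) (i : Fin n),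
        T z i = if i = 0 then 0 else Real.sqrt (lam i - c) * ⟪v i, z⟫ := fun z i => rfl
    rw [PiLp.add_apply, PiLp.smul_apply, PiLp.smul_apply, happ, happ, happ, smul_eq_mul,
      smul_eq_mul]
    by_cases h : i = 0
    · simp [h]
    · simp only [if_neg h]
      rw [inner_add_right, real_inner_smul_right, real_inner_smul_right]
      ring
  have hsplit : ∀ z, ∑ i, (lam i - c) * ⟪v i, z⟫ ^ 2
      = (lam 0 - c) * ⟪v 0, z⟫ ^ 2 + ‖T z‖ ^ 2 := by
    intro z
    rw [hTnorm z, ← Finset.add_sum_erase _ _ (Finset.mem_univ 0)]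
  have hbd : ∀ z ∈ sublevel A K c, ‖T z‖ ≤ Real.sqrt (c - lam 0) * (e * ⟪v 0, z⟫) := by
    intro z hz
    have hq := ((sublevel_iff hv heig K c z).mp hz).2
    rw [hsplit z] at hq
    have h2 : ‖T z‖ ^ 2 ≤ (Real.sqrt (c - lam 0) * (e * ⟪v 0, z⟫)) ^ 2 := by
      rw [mul_pow, mul_pow, Real.sq_sqrt (by linarith), he, one_mul]
      nlinarith
    have := Real.sqrt_le_sqrt h2
    rwa [Real.sqrt_sq (norm_nonneg _),
      Real.sqrt_sq (mul_nonneg (Real.sqrt_nonneg _) (hsgn z hz))] at this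
  intro x hx y hy α β hα hβ hαβ
  have hx' := (sublevel_iff hv heig K c x).mp hx
  have hy' := (sublevel_iff hv heig K c y).mp hy
  refine (sublevel_iff hv heig K c _).mpr ⟨hKc.interior hx'.1 hy'.1 hα hβ hαβ, ?_⟩
  have ha0 : ⟪v 0, α • x + β • y⟫ = α * ⟪v 0, x⟫ + β * ⟪v 0, y⟫ := by
    rw [inner_add_right, real_inner_smul_right, real_inner_smul_right]
  have hchain : ‖T (α • x + β • y)‖ ≤
      Real.sqrt (c - lam 0) * (e * ⟪v 0, α • x + β • y⟫) := by
    rw [hTlin α β x y]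
    calc ‖α • T x + β • T y‖ ≤ ‖α • T x‖ + ‖β • T y‖ := norm_add_le _ _
      _ = α * ‖T x‖ + β * ‖T y‖ := by
          rw [norm_smul, norm_smul, Real.norm_eq_abs, Real.norm_eq_abs,
            abs_of_nonneg hα, abs_of_nonneg hβ]
      _ ≤ α * (Real.sqrt (c - lam 0) * (e * ⟪v 0, x⟫))
            + β * (Real.sqrt (c - lam 0) * (e * ⟪v 0, y⟫)) := by
          have h1 := hbd x hx
          have h2 := hbd y hy
          have := mul_le_mul_of_nonneg_left h1 hα
          have := mul_le_mul_of_nonneg_left h2 hβ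
          linarith
      _ = Real.sqrt (c - lam 0) * (e * ⟪v 0, α • x + β • y⟫) := by
          rw [ha0]; ring
  have hz0 : 0 ≤ e * ⟪v 0, α • x + β • y⟫ := by
    rw [ha0]
    have h1 := hsgn x hx
    have h2 := hsgn y hy
    have := mul_le_mul_of_nonneg_left h1 hα
    have := mul_le_mul_of_nonneg_left h2 hβ
    nlinarith
  have hsq : ‖T (α • x + β • y)‖ ^ 2 ≤ (c - lam 0) * ⟪v 0, α • x + β • y⟫ ^ 2 := by
    have := pow_le_pow_left₀ (norm_nonneg _) hchain 2
    rw [mul_pow, mul_pow, Real.sq_sqrt (by linarith), he, one_mul] at this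
    linarith
  rw [hsplit]
  linarith

end helpers

set_option maxHeartbeats 1000000 in
theorem stmt5 (n : ℕ) [NeZero n] (hn : 2 ≤ n)
    (K : Set (EuclideanSpace ℝ (Fin n))) (hK : IsProperCone K) (hsub : K ⊆ dualCone K)
    (A : Matrix (Fin n) (Fin n) ℝ) (hA : A.IsSymm)
    (v : Fin n → EuclideanSpace ℝ (Fin n)) (hv : Orthonormal ℝ v)
    (lam : Fin n → ℝ) (heig : ∀ i, Matrix.toEuclideanLin A (v i) = lam i • v i)
    (hmono : Monotone lam) (h12 : lam 0 < lam 1) :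
    let L := ellipCone v (fun i => (lam i - lam 1) / (lam 1 - lam 0))
    let W := (L ∪ -L) ∩ interior K
    ((∀ c : ℝ, c ∉ Set.Ioo (lam 1) (lam ⟨n - 1, by omega⟩) → Convex ℝ (sublevel A K c)) ↔
      v 0 ∈ dualCone W ∪ -dualCone W) := by
  intro L W
  have h0K := zero_not_mem_interior hK
  have hKconv := hK.2.1
  have hWiff : ∀ x, x ∈ W ↔ x ∈ interior K ∧ ∑ i, (lam i - lam 1) * ⟪v i, x⟫ ^ 2 ≤ 0 := by
    intro x
    have h1 : x ∈ W ↔ (x ∈ (L ∪ -L)) ∧ x ∈ interior K := Iff.rfl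
    rw [h1, ellip_iff hv hn hmono h12 x, and_comm]
  have hcoef : ∀ (i : Fin n), i ≠ 0 → lam 1 ≤ lam i := fun i hi => hmono (fin_one_le hn hi)
  have hlast : ∀ i : Fin n, lam i ≤ lam ⟨n - 1, by omega⟩ := by
    intro i
    apply hmono
    rw [Fin.le_def]
    show i.val ≤ n - 1
    have := i.isLt
    omega
  constructor
  · -- Forward direction
    intro hconv
    by_contra hcon
    rw [Set.mem_union] at hcon
    push_neg at hcon
    obtain ⟨hc1', hc2'⟩ := hcon
    obtain ⟨x, hxW, hx0⟩ : ∃ x ∈ W, ⟪v 0, x⟫ < 0 := by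
      by_contra h
      push_neg at h
      exact hc1' fun y hy => h y hy
    obtain ⟨y, hyW, hy0⟩ : ∃ y ∈ W, 0 < ⟪v 0, y⟫ := by
      by_contra h
      push_neg at h
      refine hc2' (Set.mem_neg.mpr fun y hy => ?_)
      rw [inner_neg_left]
      linarith [h y hy]
    obtain ⟨hxint, hxq⟩ := (hWiff x).mp hxW
    obtain ⟨hyint, hyq⟩ := (hWiff y).mp hyW
    obtain ⟨δx, hδx, hbx⟩ := Metric.isOpen_iff.mp isOpen_interior x hxint
    obtain ⟨δy, hδy, hby⟩ := Metric.isOpen_iff.mp isOpen_interior y hyint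
    set ε : ℝ := min δx δy / 2 with hεdef
    have hε : 0 < ε := by
      rw [hεdef]
      have := lt_min hδx hδy
      linarith
    have hnv : ‖v 0‖ = 1 := hv.1 0
    set x' := x - ε • v 0 with hx'def
    set y' := y + ε • v 0 with hy'def
    have hnorm_eps : ‖ε • v 0‖ = ε := by
      rw [norm_smul, hnv, mul_one, Real.norm_eq_abs, abs_of_pos hε]
    have hx'int : x' ∈ interior K := by
      apply hbx
      rw [Metric.mem_ball, dist_eq_norm]
      have h2 : x' - x = -(ε • v 0) := by rw [hx'def]; abel
      rw [h2, norm_neg, hnorm_eps]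
      have := min_le_left δx δy
      rw [hεdef]
      linarith
    have hy'int : y' ∈ interior K := by
      apply hby
      rw [Metric.mem_ball, dist_eq_norm]
      have h2 : y' - y = ε • v 0 := by rw [hy'def]; abel
      rw [h2, hnorm_eps]
      have := min_le_right δx δy
      rw [hεdef]
      linarith
    have hvv : ∀ i : Fin n, ⟪v i, v 0⟫ = if i = 0 then 1 else 0 :=
      fun i => orthonormal_iff_ite.mp hv i 0
    have hax' : ∀ i, ⟪v i, x'⟫ = ⟪v i, x⟫ - if i = 0 then ε else 0 := by
      intro i
      rw [hx'def, inner_sub_right, real_inner_smul_right, hvv i]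
      split_ifs <;> ring
    have hay' : ∀ i, ⟪v i, y'⟫ = ⟪v i, y⟫ + if i = 0 then ε else 0 := by
      intro i
      rw [hy'def, inner_add_right, real_inner_smul_right, hvv i]
      split_ifs <;> ring
    have hsx' : ∑ i, (lam i - lam 1) * ⟪v i, x'⟫ ^ 2 = (lam 0 - lam 1) * ⟪v 0, x'⟫ ^ 2
        + ∑ i ∈ Finset.univ.erase 0, (lam i - lam 1) * ⟪v i, x'⟫ ^ 2 :=
      (Finset.add_sum_erase _ _ (Finset.mem_univ 0)).symm
    have hsx : ∑ i, (lam i - lam 1) * ⟪v i, x⟫ ^ 2 = (lam 0 - lam 1) * ⟪v 0, x⟫ ^ 2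
        + ∑ i ∈ Finset.univ.erase 0, (lam i - lam 1) * ⟪v i, x⟫ ^ 2 :=
      (Finset.add_sum_erase _ _ (Finset.mem_univ 0)).symm
    have hsy' : ∑ i, (lam i - lam 1) * ⟪v i, y'⟫ ^ 2 = (lam 0 - lam 1) * ⟪v 0, y'⟫ ^ 2
        + ∑ i ∈ Finset.univ.erase 0, (lam i - lam 1) * ⟪v i, y'⟫ ^ 2 :=
      (Finset.add_sum_erase _ _ (Finset.mem_univ 0)).symm
    have hsy : ∑ i, (lam i - lam 1) * ⟪v i, y⟫ ^ 2 = (lam 0 - lam 1) * ⟪v 0, y⟫ ^ 2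
        + ∑ i ∈ Finset.univ.erase 0, (lam i - lam 1) * ⟪v i, y⟫ ^ 2 :=
      (Finset.add_sum_erase _ _ (Finset.mem_univ 0)).symm
    have herasex : ∑ i ∈ Finset.univ.erase 0, (lam i - lam 1) * ⟪v i, x'⟫ ^ 2
        = ∑ i ∈ Finset.univ.erase 0, (lam i - lam 1) * ⟪v i, x⟫ ^ 2 :=
      Finset.sum_congr rfl fun i hi => by
        rw [hax' i, if_neg (Finset.mem_erase.mp hi).1, sub_zero]
    have herasey : ∑ i ∈ Finset.univ.erase 0, (lam i - lam 1) * ⟪v i, y'⟫ ^ 2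
        = ∑ i ∈ Finset.univ.erase 0, (lam i - lam 1) * ⟪v i, y⟫ ^ 2 :=
      Finset.sum_congr rfl fun i hi => by
        rw [hay' i, if_neg (Finset.mem_erase.mp hi).1, add_zero]
    have hqx' : ∑ i, (lam i - lam 1) * ⟪v i, x'⟫ ^ 2 < 0 := by
      rw [hsx', herasex, hax' 0, if_pos rfl]
      rw [hsx] at hxq
      have hkey : 0 < (lam 1 - lam 0) * (ε * ε - 2 * ε * ⟪v 0, x⟫) :=
        mul_pos (by linarith) (by nlinarith [mul_pos hε hε, mul_pos hε (neg_pos.mpr hx0)])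
      nlinarith [hkey]
    have hqy' : ∑ i, (lam i - lam 1) * ⟪v i, y'⟫ ^ 2 < 0 := by
      rw [hsy', herasey, hay' 0, if_pos rfl]
      rw [hsy] at hyq
      have hkey : 0 < (lam 1 - lam 0) * (ε * ε + 2 * ε * ⟪v 0, y⟫) :=
        mul_pos (by linarith) (by nlinarith [mul_pos hε hε, mul_pos hε hy0])
      nlinarith [hkey]
    have hx'ne : x' ≠ 0 := fun h => h0K (h ▸ hx'int)
    have hy'ne : y' ≠ 0 := fun h => h0K (h ▸ hy'int)
    have hnx : (0:ℝ) < ‖x'‖ ^ 2 := pow_pos (norm_pos_iff.mpr hx'ne) 2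
    have hny : (0:ℝ) < ‖y'‖ ^ 2 := pow_pos (norm_pos_iff.mpr hy'ne) 2
    set c := max (quadForm A x' / ‖x'‖ ^ 2) (quadForm A y' / ‖y'‖ ^ 2) with hcdef
    have hqx'2 : quadForm A x' - lam 1 * ‖x'‖ ^ 2 < 0 := by
      rw [← sum_sub_eq hv heig]; exact hqx'
    have hqy'2 : quadForm A y' - lam 1 * ‖y'‖ ^ 2 < 0 := by
      rw [← sum_sub_eq hv heig]; exact hqy'
    have hclt : c < lam 1 := by
      rw [hcdef, max_lt_iff]
      constructor
      · rw [div_lt_iff₀ hnx]; linarith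
      · rw [div_lt_iff₀ hny]; linarith
    have hcvx := hconv c (fun h => absurd h.1 (by push_neg; linarith))
    have hx'mem : x' ∈ sublevel A K c := by
      refine (sublevel_iff hv heig K c x').mpr ⟨hx'int, ?_⟩
      rw [sum_sub_eq hv heig]
      have h1 : quadForm A x' / ‖x'‖ ^ 2 ≤ c := le_max_left _ _
      rw [div_le_iff₀ hnx] at h1
      linarith
    have hy'mem : y' ∈ sublevel A K c := by
      refine (sublevel_iff hv heig K c y').mpr ⟨hy'int, ?_⟩
      rw [sum_sub_eq hv heig]
      have h1 : quadForm A y' / ‖y'‖ ^ 2 ≤ c := le_max_right _ _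
      rw [div_le_iff₀ hny] at h1
      linarith
    set p := ⟪v 0, x'⟫ with hpdef
    set q := ⟪v 0, y'⟫ with hqdef
    have hp : p < 0 := by rw [hpdef, hax' 0, if_pos rfl]; linarith
    have hq : 0 < q := by rw [hqdef, hay' 0, if_pos rfl]; linarith
    have hpq : p - q < 0 := by linarith
    have hpqne : p - q ≠ 0 := ne_of_lt hpq
    set t := p / (p - q) with htdef
    have ht0 : 0 < t := by
      rw [htdef, div_pos_iff]
      right
      exact ⟨hp, hpq⟩
    have ht1 : t ≤ 1 := by rw [htdef, div_le_iff_of_neg hpq]; linarith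
    set z := (1 - t) • x' + t • y' with hzdef
    have hzmem : z ∈ sublevel A K c :=
      hcvx hx'mem hy'mem (by linarith) (le_of_lt ht0) (by ring)
    have ha0z : ⟪v 0, z⟫ = 0 := by
      rw [hzdef, inner_add_right, real_inner_smul_right, real_inner_smul_right,
        ← hpdef, ← hqdef, htdef]
      field_simp
      ring
    obtain ⟨hzint, hzq⟩ := (sublevel_iff hv heig K c z).mp hzmem
    have hnn : ∀ i, 0 ≤ (lam i - c) * ⟪v i, z⟫ ^ 2 := by
      intro i
      by_cases h : i = 0
      · rw [h, ha0z]
        simp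
      · have := hcoef i h
        nlinarith [sq_nonneg ⟪v i, z⟫]
    have hall := coords_eq_zero hnn hzq
    have hz0 : z = 0 := by
      apply coords_zero hv
      intro i
      by_cases h : i = 0
      · rw [h]; exact ha0z
      · have h1 := hall i
        have h2 : 0 < lam i - c := by have := hcoef i h; linarith
        rcases mul_eq_zero.mp h1 with h3 | h3
        · linarith
        · exact pow_eq_zero_iff (two_ne_zero) |>.mp h3
    rw [hz0] at hzint
    exact h0K hzint
  · -- Backward direction
    intro hd c hc
    by_cases hlastc : lam ⟨n - 1, by omega⟩ ≤ c
    · intro x hx y hy α β hα hβ hαβ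
      obtain ⟨hxint, _⟩ := (sublevel_iff hv heig K c x).mp hx
      obtain ⟨hyint, _⟩ := (sublevel_iff hv heig K c y).mp hy
      refine (sublevel_iff hv heig K c _).mpr ⟨hKconv.interior hxint hyint hα hβ hαβ, ?_⟩
      refine Finset.sum_nonpos fun i _ => ?_
      have := hlast i
      nlinarith [sq_nonneg ⟪v i, α • x + β • y⟫]
    · have hc1' : c ≤ lam 1 := by
        by_contra h
        push_neg at h
        exact hc ⟨h, not_le.mp hlastc⟩
      by_cases hc0 : lam 0 ≤ c
      · have hsgn' : ∀ x ∈ sublevel A K c, x ∈ W := by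
          intro x hx
          obtain ⟨hxint, hxq⟩ := (sublevel_iff hv heig K c x).mp hx
          refine (hWiff x).mpr ⟨hxint, le_trans ?_ hxq⟩
          refine Finset.sum_le_sum fun i _ => ?_
          nlinarith [sq_nonneg ⟪v i, x⟫]
        rcases hd with h | h
        · exact convex_main hv heig hn hmono hKconv hc0 hc1' (e := 1) (by norm_num)
            (fun x hx => by rw [one_mul]; exact h _ (hsgn' x hx))
        · refine convex_main hv heig hn hmono hKconv hc0 hc1' (e := -1) (by norm_num) ?_
          intro x hx
          have h2 := Set.mem_neg.mp h _ (hsgn' x hx)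
          rw [inner_neg_left] at h2
          linarith
      · have hempty : sublevel A K c = ∅ := by
          rw [Set.eq_empty_iff_forall_notMem]
          intro x hx
          obtain ⟨hxint, hxq⟩ := (sublevel_iff hv heig K c x).mp hx
          have hlt : ∀ i, 0 < lam i - c := by
            intro i
            have : lam 0 ≤ lam i := hmono (Fin.zero_le i)
            push_neg at hc0
            linarith
          have hnn : ∀ i, 0 ≤ (lam i - c) * ⟪v i, x⟫ ^ 2 := by
            intro i
            have := hlt i
            nlinarith [sq_nonneg ⟪v i, x⟫]
          have hall := coords_eq_zero hnn hxq
          have hx0 : x = 0 := by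
            apply coords_zero hv
            intro i
            rcases mul_eq_zero.mp (hall i) with h3 | h3
            · linarith [hlt i]
            · exact pow_eq_zero_iff (two_ne_zero) |>.mp h3
          rw [hx0] at hxint
          exact h0K hxint
        rw [hempty]
        exact convex_empty
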